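/- Let q = 2^n with n ≥ 1, and let F_{q,1} = {d ∈ F_q : Tr_{F_q/F_2}(d) = 1}. Then {1/(ζ + ζ^{-1}) : ζ ∈ μ_{q+1}, ζ ≠ 1} = F_{q,1}, where μ_{q+1} is the group of (q+1)-st roots of unity in F_{q^2}. -/

import Mathlib

open Finset Polynomial

section helpers
set_option linter.unusedSectionVars false
variable {K : Type*} [Field K] [CharP K 2]

lemma my_sq_eq_zero_or_one {a : K} (h : a ^ 2 = a) : a = 0 ∨ a = 1 := by
  have h2 : a * (a - 1) = 0 := by rw [mul_sub, mul_one, ← sq, h, sub_self]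
  rcases mul_eq_zero.1 h2 with h0 | h1
  · exact Or.inl h0
  · exact Or.inr (sub_eq_zero.1 h1)

lemma my_sq_eq_one {a : K} (h : a ^ 2 = 1) : a = 1 := by
  have h2 : (a + 1) ^ 2 = 0 := by
    rw [CharTwo.add_sq, h, one_pow, CharTwo.add_self_eq_zero]
  have h3 : a + 1 = 0 := by simpa using pow_eq_zero_iff (two_ne_zero (α := ℕ)) |>.mp h2
  have h4 : a = -1 := eq_neg_of_add_eq_zero_left h3
  rw [h4, CharTwo.neg_eq]

lemma my_sq_sum (x : K) (k : ℕ) :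
    (∑ i ∈ range k, x ^ 2 ^ i) ^ 2 = ∑ i ∈ range k, x ^ 2 ^ (i + 1) := by
  rw [sum_pow_char]
  exact Finset.sum_congr rfl fun i _ => by rw [← pow_mul, ← pow_succ]

lemma my_sum_shift {x : K} {m : ℕ} (hx : x ^ 2 ^ m = x) :
    ∑ i ∈ range m, x ^ 2 ^ (i + 1) = ∑ i ∈ range m, x ^ 2 ^ i := by
  have h1 := Finset.sum_range_succ (fun i => x ^ 2 ^ i) m
  have h2 := Finset.sum_range_succ' (fun i => x ^ 2 ^ i) m
  simp only [pow_zero, pow_one, hx] at h1 h2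
  rw [h1] at h2
  exact (add_right_cancel h2).symm

lemma my_iter_pow {x y : K} (h : y ^ 2 + y = x) (k : ℕ) :
    y ^ 2 ^ k = y + ∑ i ∈ range k, x ^ 2 ^ i := by
  have hy2 : y ^ 2 = x + y := by
    rw [← h, add_assoc, CharTwo.add_self_eq_zero, add_zero]
  induction k with
  | zero => simp
  | succ k ih =>
    have hs : y ^ 2 ^ (k + 1) = (y ^ 2 ^ k) ^ 2 := by rw [← pow_mul, pow_succ]
    rw [hs, ih, CharTwo.add_sq, hy2, my_sq_sum,
      Finset.sum_range_succ' (fun i => x ^ 2 ^ i) k]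
    simp only [pow_zero, pow_one]
    ring

lemma my_artin_schreier (K : Type*) [Field K] [Fintype K] [CharP K 2] (m : ℕ) (hm : 0 < m)
    (hcard : Fintype.card K = 2 ^ m) {a : K} (ha : ∑ i ∈ range m, a ^ 2 ^ i = 0) :
    ∃ y : K, y ^ 2 + y = a := by
  have hpc : ∀ x : K, x ^ 2 ^ m = x := fun x => by rw [← hcard]; exact FiniteField.pow_card x
  classical
  set φ : K →+ K := AddMonoidHom.mk' (fun y => y ^ 2 + y)
    (fun a b => by
      show (a + b) ^ 2 + (a + b) = (a ^ 2 + a) + (b ^ 2 + b)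
      rw [CharTwo.add_sq]; ring) with hφ
  set ψ : K →+ K := AddMonoidHom.mk' (fun x => ∑ i ∈ range m, x ^ 2 ^ i)
    (fun a b => by
      show ∑ i ∈ range m, (a + b) ^ 2 ^ i = _
      rw [← Finset.sum_add_distrib]
      exact Finset.sum_congr rfl fun i _ => by rw [add_pow_char_pow]) with hψ
  -- ψ of squares and idempotency
  have hψsq : ∀ x : K, (ψ x) ^ 2 = ψ x := by
    intro x
    show (∑ i ∈ range m, x ^ 2 ^ i) ^ 2 = ∑ i ∈ range m, x ^ 2 ^ i
    rw [my_sq_sum, my_sum_shift (hpc x)]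
  -- range φ ⊆ ker ψ
  have hsub : (φ.range : Set K) ⊆ (ψ.ker : Set K) := by
    rintro x ⟨y, rfl⟩
    show ψ (y ^ 2 + y) = 0
    rw [map_add]
    have h1 : ψ (y ^ 2) = (ψ y) ^ 2 := by
      show ∑ i ∈ range m, (y ^ 2) ^ 2 ^ i = (∑ i ∈ range m, y ^ 2 ^ i) ^ 2
      rw [my_sq_sum]
      exact Finset.sum_congr rfl fun i _ => by rw [← pow_mul, pow_succ']
    rw [h1, hψsq, CharTwo.add_self_eq_zero]
  -- card of ker φ
  have hkerset : (φ.ker : Set K) = {0, 1} := by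
    ext y
    simp only [SetLike.mem_coe, AddMonoidHom.mem_ker, Set.mem_insert_iff,
      Set.mem_singleton_iff]
    show y ^ 2 + y = 0 ↔ _
    constructor
    · intro h
      have h2 : y * (y + 1) = 0 := by rw [mul_add, mul_one, ← sq]; linear_combination h
      rcases mul_eq_zero.1 h2 with h0 | h1
      · exact Or.inl h0
      · exact Or.inr (by rw [eq_neg_of_add_eq_zero_left h1, CharTwo.neg_eq])
    · rintro (rfl | rfl) <;> simp [CharTwo.add_self_eq_zero]
  have hcardker : Nat.card φ.ker = 2 := by
    have : Nat.card φ.ker = ((φ.ker : Set K)).ncard := Nat.card_coe_set_eq _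
    rw [this, hkerset, Set.ncard_pair (zero_ne_one (α := K))]
  -- card of range φ
  have hq1 : Nat.card K = Nat.card φ.range * 2 := by
    rw [AddSubgroup.card_eq_card_quotient_mul_card_addSubgroup φ.ker, hcardker,
      Nat.card_congr (QuotientAddGroup.quotientKerEquivRange φ).toEquiv]
  have hcardrange : Nat.card φ.range = 2 ^ (m - 1) := by
    have h2 : (2 : ℕ) ^ m = 2 ^ (m - 1) * 2 := by
      rw [← pow_succ]; congr 1; omega
    have h3 : Nat.card φ.range * 2 = 2 ^ (m - 1) * 2 := by
      rw [← hq1, Nat.card_eq_fintype_card, hcard, h2]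
    exact Nat.eq_of_mul_eq_mul_right (by norm_num) h3
  -- polynomial bound on ker ψ
  set P : K[X] := ∑ i ∈ range m, X ^ 2 ^ i with hP
  have hPc : P.coeff 1 = 1 := by
    rw [hP, finset_sum_coeff]
    rw [Finset.sum_eq_single 0]
    · simp
    · intro i _ hi
      rw [coeff_X_pow, if_neg]
      intro h
      exact hi (by
        have : 1 < 2 ^ i := Nat.one_lt_two_pow hi
        omega)
    · intro h; exact absurd (Finset.mem_range.2 hm) h
  have hPne : P ≠ 0 := by intro h; rw [h] at hPc; simp at hPc
  have hPdeg : P.natDegree ≤ 2 ^ (m - 1) := by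
    refine natDegree_sum_le_of_forall_le _ _ fun i hi => ?_
    rw [natDegree_X_pow]
    exact Nat.pow_le_pow_right (by norm_num) (by have := Finset.mem_range.1 hi; omega)
  have hroots : (ψ.ker : Set K) ⊆ (P.roots.toFinset : Set K) := by
    intro x hx
    simp only [Finset.coe_sort_coe, Multiset.mem_toFinset, Finset.mem_coe]
    rw [mem_roots hPne]
    have hev : P.eval x = 0 := by
      rw [hP, eval_finset_sum]
      simp only [eval_pow, eval_X]
      exact hx
    exact hev
  have hcardkerψ : Nat.card ψ.ker ≤ 2 ^ (m - 1) := by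
    have h1 : Nat.card ψ.ker = ((ψ.ker : Set K)).ncard := Nat.card_coe_set_eq _
    rw [h1]
    calc ((ψ.ker : Set K)).ncard ≤ ((P.roots.toFinset : Set K)).ncard :=
          Set.ncard_le_ncard hroots (Set.toFinite _)
      _ = P.roots.toFinset.card := Set.ncard_coe_finset _
      _ ≤ Multiset.card P.roots := Multiset.toFinset_card_le _
      _ ≤ P.natDegree := P.card_roots'
      _ ≤ 2 ^ (m - 1) := hPdeg
  -- set equality
  have hsets : (φ.range : Set K) = (ψ.ker : Set K) := by
    refine Set.eq_of_subset_of_ncard_le hsub ?_ (Set.toFinite _)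
    rw [← Nat.card_coe_set_eq, ← Nat.card_coe_set_eq]
    show Nat.card ψ.ker ≤ Nat.card φ.range
    rw [hcardrange]; exact hcardkerψ
  have hmem : a ∈ (ψ.ker : Set K) := by
    simp only [SetLike.mem_coe, AddMonoidHom.mem_ker]
    exact ha
  rw [← hsets] at hmem
  obtain ⟨y, hy⟩ := hmem
  exact ⟨y, hy⟩

end helpers

theorem inv_ang_zeta_eq_trace_one (n : ℕ) (hn : 0 < n) (q : ℕ) (hq : q = 2 ^ n) :
    {x : GaloisField 2 (2 * n) | ∃ ζ : GaloisField 2 (2 * n),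
        ζ ^ (q + 1) = 1 ∧ ζ ≠ 1 ∧ x = (ζ + ζ⁻¹)⁻¹}
      = {d : GaloisField 2 (2 * n) | d ^ q = d ∧
          ∑ i ∈ Finset.range n, d ^ 2 ^ i = 1} := by
  subst hq
  set K := GaloisField 2 (2 * n) with hK
  haveI : Fintype K := Fintype.ofFinite K
  have hcard : Fintype.card K = 2 ^ (2 * n) := by
    have := GaloisField.card 2 (2 * n) (by omega)
    rwa [Nat.card_eq_fintype_card] at this
  have hq2 : (2 : ℕ) ≤ 2 ^ n := by
    calc (2:ℕ) = 2 ^ 1 := (pow_one 2).symm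
    _ ≤ 2 ^ n := Nat.pow_le_pow_right (by norm_num) hn
  ext x
  simp only [Set.mem_setOf_eq]
  constructor
  · rintro ⟨ζ, hζq, hζ1, rfl⟩
    have hζ0 : ζ ≠ 0 := by
      rintro rfl
      rw [zero_pow (by positivity)] at hζq
      exact zero_ne_one hζq
    have hinv : ζ⁻¹ = ζ ^ 2 ^ n := by
      apply inv_eq_of_mul_eq_one_right
      rw [← pow_succ']
      exact hζq
    have hqq : ζ ^ (2 ^ n * 2 ^ n) = ζ := by
      obtain ⟨r, hr⟩ : ∃ r, 2 ^ n = r + 1 := ⟨2 ^ n - 1, by omega⟩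
      have he : 2 ^ n * 2 ^ n = (2 ^ n + 1) * (2 ^ n - 1) + 1 := by
        rw [hr]; simp only [Nat.add_sub_cancel]; ring
      rw [he, pow_add, pow_mul, hζq, one_pow, pow_one, one_mul]
    have hcq : (ζ + ζ⁻¹) ^ 2 ^ n = ζ + ζ⁻¹ := by
      rw [add_pow_char_pow, hinv, ← pow_mul, hqq, add_comm]
    have hc0 : ζ + ζ⁻¹ ≠ 0 := by
      intro h
      have h1 : ζ = ζ⁻¹ := by
        have h1' : ζ = -ζ⁻¹ := eq_neg_of_add_eq_zero_left h
        rwa [CharTwo.neg_eq] at h1'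
      have h2 : ζ ^ 2 = 1 := by
        rw [sq]
        nth_rewrite 2 [h1]
        exact mul_inv_cancel₀ hζ0
      exact hζ1 (my_sq_eq_one h2)
    have hxq : ((ζ + ζ⁻¹)⁻¹) ^ 2 ^ n = (ζ + ζ⁻¹)⁻¹ := by rw [inv_pow, hcq]
    refine ⟨hxq, ?_⟩
    -- let y = ζ * c⁻¹
    have hzc : ζ * (ζ + ζ⁻¹) = ζ ^ 2 + 1 := by
      rw [mul_add, mul_inv_cancel₀ hζ0, sq]
    have hkey : ζ ^ 2 + ζ * (ζ + ζ⁻¹) = 1 := by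
      rw [hzc, ← add_assoc, CharTwo.add_self_eq_zero, zero_add]
    have hy : (ζ * (ζ + ζ⁻¹)⁻¹) ^ 2 + ζ * (ζ + ζ⁻¹)⁻¹ = ((ζ + ζ⁻¹)⁻¹) ^ 2 := by
      have step : (ζ * (ζ + ζ⁻¹)⁻¹) ^ 2 + ζ * (ζ + ζ⁻¹)⁻¹
          = (ζ ^ 2 + ζ * (ζ + ζ⁻¹)) * ((ζ + ζ⁻¹)⁻¹) ^ 2 := by
        rw [add_mul, mul_pow]
        congr 1
        rw [sq, ← mul_assoc, mul_assoc ζ (ζ + ζ⁻¹), mul_inv_cancel₀ hc0, mul_one]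
      rw [step, hkey, one_mul]
    -- trace is 0 or 1
    have hts : (∑ i ∈ range n, ((ζ + ζ⁻¹)⁻¹) ^ 2 ^ i) ^ 2
        = ∑ i ∈ range n, ((ζ + ζ⁻¹)⁻¹) ^ 2 ^ i := by
      rw [my_sq_sum, my_sum_shift hxq]
    have hyq : (ζ * (ζ + ζ⁻¹)⁻¹) ^ 2 ^ n
        = ζ * (ζ + ζ⁻¹)⁻¹ + ∑ i ∈ range n, ((ζ + ζ⁻¹)⁻¹) ^ 2 ^ i := by
      rw [my_iter_pow hy n]
      congr 1
      calc ∑ i ∈ range n, (((ζ + ζ⁻¹)⁻¹) ^ 2) ^ 2 ^ i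
          = (∑ i ∈ range n, ((ζ + ζ⁻¹)⁻¹) ^ 2 ^ i) ^ 2 := by
            rw [sum_pow_char]
            exact Finset.sum_congr rfl fun i _ => by
              rw [← pow_mul, ← pow_mul]
              congr 1
              exact Nat.mul_comm _ _
        _ = ∑ i ∈ range n, ((ζ + ζ⁻¹)⁻¹) ^ 2 ^ i := hts
    rcases my_sq_eq_zero_or_one hts with ht0 | ht1
    · exfalso
      rw [ht0, add_zero] at hyq
      -- then ζ^q = ζ
      have hζy : ζ = (ζ * (ζ + ζ⁻¹)⁻¹) * (ζ + ζ⁻¹) := by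
        rw [mul_assoc, inv_mul_cancel₀ hc0, mul_one]
      have hζqζ : ζ ^ 2 ^ n = ζ := by
        nth_rewrite 1 [hζy]
        rw [mul_pow, hyq, hcq, ← hζy]
      have h2 : ζ ^ 2 = 1 := by
        have := hζq
        rw [pow_succ, hζqζ, ← sq] at this
        exact this
      exact hζ1 (my_sq_eq_one h2)
    · exact ht1
  · rintro ⟨hdq, htd⟩
    have hd0 : x ≠ 0 := by
      rintro rfl
      rw [Finset.sum_congr rfl (fun i _ => zero_pow (by positivity))] at htd
      simp at htd
    have hdn : x ^ 2 ^ n = x := hdq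
    -- trace over the big field of x^2 vanishes
    have hT : ∑ i ∈ range (2 * n), (x ^ 2) ^ 2 ^ i = 0 := by
      have he : ∀ i, (x ^ 2) ^ 2 ^ i = x ^ 2 ^ (i + 1) := fun i => by
        rw [← pow_mul, ← pow_succ']
      rw [show range (2 * n) = range (n + n) from by rw [two_mul], Finset.sum_range_add]
      have hshift : ∀ i, (x ^ 2) ^ 2 ^ (n + i) = (x ^ 2) ^ 2 ^ i := by
        intro i
        rw [he, he, show n + i + 1 = n + (i + 1) from by ring, pow_add, pow_mul, hdn]
      rw [Finset.sum_congr rfl (fun i _ => hshift i), CharTwo.add_self_eq_zero]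
    obtain ⟨y, hy⟩ := my_artin_schreier K (2 * n) (by omega) hcard hT
    -- let ζ = y * x⁻¹
    have hkey : (y * x⁻¹) * (y * x⁻¹ + x⁻¹) = 1 := by
      rw [show (y * x⁻¹) * (y * x⁻¹ + x⁻¹) = (y ^ 2 + y) * (x⁻¹) ^ 2 by ring, hy, ← mul_pow,
        mul_inv_cancel₀ hd0, one_pow]
    have hζ0 : y * x⁻¹ ≠ 0 := left_ne_zero_of_mul_eq_one hkey
    have hinv : (y * x⁻¹)⁻¹ = y * x⁻¹ + x⁻¹ := inv_eq_of_mul_eq_one_right hkey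
    have hsum : y * x⁻¹ + (y * x⁻¹)⁻¹ = x⁻¹ := by
      rw [hinv, ← add_assoc, CharTwo.add_self_eq_zero, zero_add]
    have hζ1 : y * x⁻¹ ≠ 1 := by
      intro h
      rw [h, inv_one] at hsum
      rw [CharTwo.add_self_eq_zero] at hsum
      exact inv_ne_zero hd0 hsum.symm
    have hyq : y ^ 2 ^ n = y + 1 := by
      rw [my_iter_pow hy n]
      congr 1
      calc ∑ i ∈ range n, (x ^ 2) ^ 2 ^ i
          = (∑ i ∈ range n, x ^ 2 ^ i) ^ 2 := by
            rw [sum_pow_char]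
            exact Finset.sum_congr rfl fun i _ => by
              rw [← pow_mul, ← pow_mul]
              congr 1
              exact Nat.mul_comm _ _
        _ = 1 := by rw [htd, one_pow]
    have hζpow : (y * x⁻¹) ^ 2 ^ n = y * x⁻¹ + x⁻¹ := by
      rw [mul_pow, hyq, inv_pow, hdn, add_mul, one_mul]
    have hζq1 : (y * x⁻¹) ^ (2 ^ n + 1) = 1 := by
      rw [pow_succ, hζpow]
      rw [mul_comm] at hkey ⊢
      rw [← hkey]
      ring
    exact ⟨y * x⁻¹, hζq1, hζ1, by rw [hsum, inv_inv]⟩
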